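/- arXiv:2511.10859 — 3 statements merged into one kernel-verified Lean document; each statement's English description precedes it below -/
import Mathlib

section
/- Let f : ℝ^d → ℝ be L-smooth (gradient L-Lipschitz), λ > 0, and u uniform on √d · S^{d-1}. Define g_λ(x) = ((f(x+λu) − f(x−λu))/(2λ)) u. Then ‖E_u[g_λ(x)] − ∇f(x)‖ ≤ (L/2) λ d^{3/2}. -/
open MeasureTheory

noncomputable section

/-- `μ` is the uniform distribution on the sphere of radius `r` in `ℝ^n`. -/
def IsUniformSphere {n : ℕ} (μ : Measure (EuclideanSpace ℝ (Fin n))) (r : ℝ) : Prop :=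
  IsProbabilityMeasure μ ∧ (∀ᵐ u ∂μ, ‖u‖ = r) ∧
    ∀ O : EuclideanSpace ℝ (Fin n) ≃ₗᵢ[ℝ] EuclideanSpace ℝ (Fin n), μ.map O = μ

open RealInnerProductSpace

section Aux

-- quadratic upper bound (descent lemma)
lemma quad_bound {d : ℕ} (f : EuclideanSpace ℝ (Fin d) → ℝ) (hf : Differentiable ℝ f) (L : ℝ)
    (hL : ∀ x y, ‖gradient f x - gradient f y‖ ≤ L * ‖x - y‖) (hL0 : 0 ≤ L)
    (x h : EuclideanSpace ℝ (Fin d)) :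
    |f (x + h) - f x - ⟪gradient f x, h⟫| ≤ L / 2 * ‖h‖ ^ 2 := by
  have hgradcont : Continuous (gradient f) := by
    have : LipschitzWith (Real.toNNReal L) (gradient f) := by
      apply LipschitzWith.of_dist_le_mul
      intro a b
      rw [dist_eq_norm, dist_eq_norm]
      exact (hL a b).trans (by
        apply mul_le_mul_of_nonneg_right _ (norm_nonneg _)
        exact Real.le_coe_toNNReal L)
    exact this.continuous
  set φ' : ℝ → ℝ := fun t => ⟪gradient f (x + t • h), h⟫ with hφ'
  have hline : ∀ t : ℝ, HasDerivAt (fun s : ℝ => x + s • h) h t := by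
    intro t
    simpa using ((hasDerivAt_id t).smul_const h).const_add x
  have hderiv : ∀ t : ℝ, HasDerivAt (fun s => f (x + s • h)) (φ' t) t := by
    intro t
    have hF : HasFDerivAt f (InnerProductSpace.toDual ℝ _ (gradient f (x + t • h))) (x + t • h) :=
      (hf _).hasGradientAt.hasFDerivAt
    simpa [hφ', InnerProductSpace.toDual_apply_apply, Function.comp_def] using hF.comp_hasDerivAt t (hline t)
  have hφ'cont : Continuous φ' := by
    apply Continuous.inner
    · exact hgradcont.comp (by continuity)
    · exact continuous_const
  have hFTC : ∫ t in (0:ℝ)..1, φ' t = f (x + h) - f x := by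
    rw [intervalIntegral.integral_eq_sub_of_hasDerivAt (fun t _ => hderiv t)
      (hφ'cont.intervalIntegrable 0 1)]
    simp
  have key : f (x + h) - f x - ⟪gradient f x, h⟫
      = ∫ t in (0:ℝ)..1, (φ' t - ⟪gradient f x, h⟫) := by
    rw [intervalIntegral.integral_sub (hφ'cont.intervalIntegrable 0 1)
      (intervalIntegrable_const), hFTC]
    simp
  rw [key]
  have hbound : ∀ t ∈ Set.uIoc (0:ℝ) 1, ‖φ' t - ⟪gradient f x, h⟫‖ ≤ (L * ‖h‖ ^ 2) * t := by
    intro t ht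
    rw [Set.uIoc_of_le zero_le_one] at ht
    have : φ' t - ⟪gradient f x, h⟫ = ⟪gradient f (x + t • h) - gradient f x, h⟫ := by
      rw [inner_sub_left]
    rw [this, Real.norm_eq_abs]
    calc |⟪gradient f (x + t • h) - gradient f x, h⟫|
        ≤ ‖gradient f (x + t • h) - gradient f x‖ * ‖h‖ := abs_real_inner_le_norm _ _
      _ ≤ (L * ‖x + t • h - x‖) * ‖h‖ :=
          mul_le_mul_of_nonneg_right (hL _ _) (norm_nonneg _)
      _ = (L * ‖h‖ ^ 2) * t := by
          rw [add_sub_cancel_left, norm_smul, Real.norm_eq_abs,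
            abs_of_nonneg ht.1.le]
          ring
  calc ‖∫ t in (0:ℝ)..1, (φ' t - ⟪gradient f x, h⟫)‖
      ≤ |∫ t in (0:ℝ)..1, (L * ‖h‖ ^ 2) * t| := by
        apply intervalIntegral.norm_integral_le_abs_of_norm_le
        · exact (ae_restrict_iff' measurableSet_uIoc).2 (Filter.Eventually.of_forall hbound)
        · exact (continuous_const.mul continuous_id).intervalIntegrable 0 1
    _ = L / 2 * ‖h‖ ^ 2 := by
        rw [intervalIntegral.integral_const_mul, integral_id]
        rw [abs_of_nonneg (by positivity)]
        ring

variable{d : ℕ} {μ : Measure (EuclideanSpace ℝ (Fin d))} {r : ℝ}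

lemma sphere_inv_int (hμ : IsUniformSphere μ r) (φ : EuclideanSpace ℝ (Fin d) → ℝ)
    (hφ : AEStronglyMeasurable φ μ)
    (O : EuclideanSpace ℝ (Fin d) ≃ₗᵢ[ℝ] EuclideanSpace ℝ (Fin d)) :
    ∫ u, φ u ∂μ = ∫ u, φ (O u) ∂μ := by
  conv_lhs => rw [← hμ.2.2 O]
  rw [integral_map O.continuous.measurable.aemeasurable (by rwa [hμ.2.2])]

lemma coord_cont (i : Fin d) : Continuous (fun u : EuclideanSpace ℝ (Fin d) => u i) :=
  (EuclideanSpace.proj i).continuous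

lemma coord_abs_le (u : EuclideanSpace ℝ (Fin d)) (i : Fin d) : |u i| ≤ ‖u‖ := by
  have h2 : |u i| ^ 2 ≤ ‖u‖ ^ 2 := by
    rw [← real_inner_self_eq_norm_sq, PiLp.inner_apply]
    simp only [RCLike.inner_apply, conj_trivial]
    calc |u i| ^ 2 = u i * u i := by rw [sq_abs]; ring
      _ ≤ ∑ k, u k * u k :=
        Finset.single_le_sum (f := fun k => u k * u k)
          (fun k _ => mul_self_nonneg _) (Finset.mem_univ i)
  calc |u i| = Real.sqrt (|u i| ^ 2) := (Real.sqrt_sq (abs_nonneg _)).symm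
    _ ≤ Real.sqrt (‖u‖ ^ 2) := Real.sqrt_le_sqrt h2
    _ = ‖u‖ := Real.sqrt_sq (norm_nonneg _)

lemma coord_mul_int (hμ : IsUniformSphere μ r) (i j : Fin d) :
    Integrable (fun u : EuclideanSpace ℝ (Fin d) => u i * u j) μ := by
  haveI := hμ.1
  apply Integrable.mono' (integrable_const (r * r))
    (((coord_cont i).mul (coord_cont j)).aestronglyMeasurable)
  filter_upwards [hμ.2.1] with u hu
  rw [Real.norm_eq_abs, Pi.mul_apply, abs_mul]
  have h1 : |u i| ≤ r := by rw [← hu]; exact coord_abs_le u i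
  have h2 : |u j| ≤ r := by rw [← hu]; exact coord_abs_le u j
  exact mul_le_mul h1 h2 (abs_nonneg _) ((abs_nonneg _).trans h1)

lemma off_diag_moment (hμ : IsUniformSphere μ r) {i j : Fin d} (hij : i ≠ j) :
    ∫ u, u i * u j ∂μ = 0 := by
  classical
  set O : EuclideanSpace ℝ (Fin d) ≃ₗᵢ[ℝ] EuclideanSpace ℝ (Fin d) :=
    LinearIsometryEquiv.piLpCongrRight 2
      (fun k => if k = j then LinearIsometryEquiv.neg ℝ else LinearIsometryEquiv.refl ℝ ℝ) with hO
  have hOapp : ∀ (u : EuclideanSpace ℝ (Fin d)) (k : Fin d),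
      (O u) k = if k = j then -u k else u k := by
    intro u k
    rw [hO, LinearIsometryEquiv.piLpCongrRight_apply]
    by_cases h : k = j
    · subst h; simp
    · simp [h]
  have := sphere_inv_int hμ (fun u => u i * u j)
    (((coord_cont i).mul (coord_cont j)).aestronglyMeasurable) O
  have heq : ∀ u : EuclideanSpace ℝ (Fin d), (O u) i * (O u) j = -(u i * u j) := by
    intro u
    rw [hOapp, hOapp, if_neg hij, if_pos rfl]
    ring
  simp only [heq] at this
  rw [integral_neg] at this
  linarith

lemma diag_moment (hμ : IsUniformSphere μ (Real.sqrt d)) (hd : 1 ≤ d) (i : Fin d) :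
    ∫ u, u i * u i ∂μ = 1 := by
  classical
  haveI := hμ.1
  -- all diagonal moments are equal
  have hswap : ∀ k : Fin d, ∫ u, u k * u k ∂μ = ∫ u, u i * u i ∂μ := by
    intro k
    set O : EuclideanSpace ℝ (Fin d) ≃ₗᵢ[ℝ] EuclideanSpace ℝ (Fin d) :=
      LinearIsometryEquiv.piLpCongrLeft 2 ℝ ℝ (Equiv.swap i k) with hO
    have hOapp : ∀ u : EuclideanSpace ℝ (Fin d), (O u) k = u i := by
      intro u
      rw [hO, LinearIsometryEquiv.piLpCongrLeft_apply]
      simp only [Equiv.piCongrLeft'_apply]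
      rw [Equiv.symm_swap, Equiv.swap_apply_right]
    have := sphere_inv_int hμ (fun u => u k * u k)
      (((coord_cont k).mul (coord_cont k)).aestronglyMeasurable) O
    simpa only [hOapp] using this
  -- sum of diagonal moments is d
  have hsum : ∑ k : Fin d, ∫ u, u k * u k ∂μ = (d : ℝ) := by
    rw [← integral_finset_sum _ (fun k _ => coord_mul_int hμ k k)]
    have : ∫ u, ∑ k : Fin d, u k * u k ∂μ = ∫ (_ : EuclideanSpace ℝ (Fin d)), (d : ℝ) ∂μ := by
      apply integral_congr_ae
      filter_upwards [hμ.2.1] with u hu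
      have : ∑ k : Fin d, u k * u k = ⟪u, u⟫ := by
        rw [PiLp.inner_apply]; simp [RCLike.inner_apply, pow_two]
      rw [this, real_inner_self_eq_norm_sq, hu, Real.sq_sqrt (by positivity)]
    rw [this, integral_const, probReal_univ]
    simp
  simp only [hswap] at hsum
  rw [Finset.sum_const, Finset.card_univ, Fintype.card_fin, nsmul_eq_mul] at hsum
  have hd0 : (d : ℝ) ≠ 0 := by positivity
  field_simp at hsum
  -- hsum : d * ∫ ... = d
  simpa only [sq] using hsum

lemma inner_smul_int(hμ : IsUniformSphere μ r) (g : EuclideanSpace ℝ (Fin d)) :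
    Integrable (fun u : EuclideanSpace ℝ (Fin d) => (⟪g, u⟫ : ℝ) • u) μ := by
  haveI := hμ.1
  apply Integrable.mono' (integrable_const (‖g‖ * r * r))
  · exact (((continuous_const (y := g)).inner (𝕜 := ℝ) (continuous_id : Continuous (fun u : EuclideanSpace ℝ (Fin d) => u))).smul continuous_id).aestronglyMeasurable
  · filter_upwards [hμ.2.1] with u hu
    calc ‖(⟪g, u⟫ : ℝ) • u‖ = |⟪g, u⟫| * ‖u‖ := by simp [norm_smul]
      _ ≤ (‖g‖ * ‖u‖) * ‖u‖ :=
          mul_le_mul_of_nonneg_right (abs_real_inner_le_norm g u) (norm_nonneg u)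
      _ = ‖g‖ * r * r := by rw [hu]

lemma mean_inner (hμ : IsUniformSphere μ (Real.sqrt d)) (hd : 1 ≤ d)
    (g : EuclideanSpace ℝ (Fin d)) :
    ∫ u, (⟪g, u⟫ : ℝ) • u ∂μ = g := by
  haveI := hμ.1
  have hint := inner_smul_int hμ g
  have hcomp : ∀ j : Fin d, (∫ u, (⟪g, u⟫ : ℝ) • u ∂μ) j = g j := by
    intro j
    have hproj := (ContinuousLinearMap.integral_comp_comm (EuclideanSpace.proj j) hint).symm
    have h1 : (∫ u, (⟪g, u⟫ : ℝ) • u ∂μ) j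
        = ∫ u, (⟪g, u⟫ : ℝ) * u j ∂μ := by
      rw [show (∫ u, (⟪g, u⟫ : ℝ) • u ∂μ) j
          = EuclideanSpace.proj j (∫ u, (⟪g, u⟫ : ℝ) • u ∂μ) from rfl, hproj]
      rfl
    rw [h1]
    have h2 : ∀ u : EuclideanSpace ℝ (Fin d),
        (⟪g, u⟫ : ℝ) * u j = ∑ i : Fin d, g i * (u i * u j) := by
      intro u
      rw [PiLp.inner_apply]
      simp only [RCLike.inner_apply, conj_trivial]
      rw [Finset.sum_mul]
      exact Finset.sum_congr rfl fun i _ => by ring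
    simp only [h2]
    rw [integral_finset_sum _ (fun i _ => (coord_mul_int hμ i j).const_mul (g i))]
    rw [Finset.sum_eq_single j]
    · rw [integral_const_mul, diag_moment hμ hd j, mul_one]
    · intro i _ hij
      rw [integral_const_mul, off_diag_moment hμ hij, mul_zero]
    · intro h; exact absurd (Finset.mem_univ j) h
  ext j
  exact hcomp j

end Aux

/-- For an `L`-smooth `f` and `u` uniform on the sphere of radius `√d`, the mean of
the two-point estimator `g_λ(x) = ((f(x+λu) − f(x−λu))/(2λ)) u` satisfies
`‖E[g_λ(x)] − ∇f(x)‖ ≤ (L/2) λ d^{3/2}`. -/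
theorem two_point_estimator_bias (d : ℕ) (hd : 1 ≤ d) (L lam : ℝ) (hlam : 0 < lam)
    (f : EuclideanSpace ℝ (Fin d) → ℝ) (hf : Differentiable ℝ f)
    (hL : ∀ x y, ‖gradient f x - gradient f y‖ ≤ L * ‖x - y‖)
    (μ : Measure (EuclideanSpace ℝ (Fin d)))
    (hμ : IsUniformSphere μ (Real.sqrt d))
    (x : EuclideanSpace ℝ (Fin d)) :
    ‖(∫ u, ((f (x + lam • u) - f (x - lam • u)) / (2 * lam)) • u ∂μ) - gradient f x‖
      ≤ L / 2 * lam * (d : ℝ) ^ ((3 : ℝ) / 2) := by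
  haveI := hμ.1
  have hd0 : (0 : ℝ) < d := by exact_mod_cast hd
  -- L is nonnegative
  have hL0 : 0 ≤ L := by
    have hv : ‖(EuclideanSpace.single (⟨0, hd⟩ : Fin d) (1 : ℝ))‖ = 1 := by
      rw [EuclideanSpace.norm_single]; norm_num
    have := hL 0 (EuclideanSpace.single (⟨0, hd⟩ : Fin d) (1 : ℝ))
    rw [zero_sub, norm_neg, hv, mul_one] at this
    exact le_trans (norm_nonneg _) this
  set g := gradient f x with hg
  set c : EuclideanSpace ℝ (Fin d) → ℝ :=
    fun u => (f (x + lam • u) - f (x - lam • u)) / (2 * lam) with hc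
  set C : ℝ := L / 2 * lam * d * Real.sqrt d with hC
  -- pointwise bound on the sphere
  have key : ∀ u : EuclideanSpace ℝ (Fin d), ‖u‖ = Real.sqrt d →
      ‖c u • u - (⟪g, u⟫ : ℝ) • u‖ ≤ C := by
    intro u hu
    have hnu2 : ‖lam • u‖ ^ 2 = lam ^ 2 * d := by
      rw [norm_smul, mul_pow, hu, Real.sq_sqrt hd0.le, Real.norm_eq_abs, sq_abs]
    have q1 := quad_bound f hf L hL hL0 x (lam • u)
    have q2 := quad_bound f hf L hL hL0 x (-(lam • u))
    rw [← sub_eq_add_neg, inner_neg_right, norm_neg, sub_neg_eq_add] at q2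
    have hnum : |f (x + lam • u) - f (x - lam • u) - 2 * lam * ⟪g, u⟫|
        ≤ L * lam ^ 2 * d := by
      have habs : f (x + lam • u) - f (x - lam • u) - 2 * lam * ⟪g, u⟫
          = (f (x + lam • u) - f x - ⟪g, lam • u⟫)
            - (f (x - lam • u) - f x + ⟪g, lam • u⟫) := by
        rw [real_inner_smul_right]; ring
      rw [habs]
      calc |(f (x + lam • u) - f x - ⟪g, lam • u⟫)
            - (f (x - lam • u) - f x + ⟪g, lam • u⟫)|
          ≤ |f (x + lam • u) - f x - ⟪g, lam • u⟫|
            + |f (x - lam • u) - f x + ⟪g, lam • u⟫| := abs_sub _ _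
        _ ≤ L / 2 * ‖lam • u‖ ^ 2 + L / 2 * ‖lam • u‖ ^ 2 := add_le_add q1 q2
        _ = L * lam ^ 2 * d := by rw [hnu2]; ring
    have hdiff : |c u - ⟪g, u⟫| ≤ L / 2 * lam * d := by
      have : c u - ⟪g, u⟫
          = (f (x + lam • u) - f (x - lam • u) - 2 * lam * ⟪g, u⟫) / (2 * lam) := by
        rw [hc]; field_simp
      rw [this, abs_div, abs_of_pos (by linarith : (0:ℝ) < 2 * lam)]
      rw [div_le_iff₀ (by linarith : (0:ℝ) < 2 * lam)]
      calc |f (x + lam • u) - f (x - lam • u) - 2 * lam * ⟪g, u⟫|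
          ≤ L * lam ^ 2 * d := hnum
        _ = L / 2 * lam * d * (2 * lam) := by ring
    calc ‖c u • u - (⟪g, u⟫ : ℝ) • u‖ = |c u - ⟪g, u⟫| * ‖u‖ := by
          rw [← sub_smul, norm_smul, Real.norm_eq_abs]
      _ ≤ (L / 2 * lam * d) * Real.sqrt d := by
          rw [hu]
          exact mul_le_mul_of_nonneg_right hdiff (Real.sqrt_nonneg _)
      _ = C := by rw [hC]
  -- integrability
  have hccont : Continuous c := by
    apply Continuous.div_const
    exact (hf.continuous.comp' (continuous_const.add ((continuous_const (y := lam)).smul continuous_id))).sub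
      (hf.continuous.comp' (continuous_const.sub ((continuous_const (y := lam)).smul continuous_id)))
  have hI2 := inner_smul_int hμ g
  have hFcont : Continuous (fun u : EuclideanSpace ℝ (Fin d) =>
      c u • u - (⟪g, u⟫ : ℝ) • u) :=
    (hccont.smul continuous_id).sub (((continuous_const (y := g)).inner (𝕜 := ℝ) (continuous_id : Continuous (fun u : EuclideanSpace ℝ (Fin d) => u))).smul continuous_id)
  have hFint : Integrable (fun u : EuclideanSpace ℝ (Fin d) =>
      c u • u - (⟪g, u⟫ : ℝ) • u) μ := by
    apply Integrable.mono' (integrable_const C) hFcont.aestronglyMeasurable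
    filter_upwards [hμ.2.1] with u hu
    exact key u hu
  have hI1 : Integrable (fun u : EuclideanSpace ℝ (Fin d) => c u • u) μ := by
    have : (fun u : EuclideanSpace ℝ (Fin d) => c u • u)
        = fun u => (c u • u - (⟪g, u⟫ : ℝ) • u) + (⟪g, u⟫ : ℝ) • u := by
      funext u; abel
    rw [this]
    exact hFint.add hI2
  have hsplit : (∫ u, c u • u ∂μ) - g
      = ∫ u, (c u • u - (⟪g, u⟫ : ℝ) • u) ∂μ := by
    rw [integral_sub hI1 hI2, mean_inner hμ hd g]
  have hfinal : ‖(∫ u, c u • u ∂μ) - g‖ ≤ C := by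
    rw [hsplit]
    have := norm_integral_le_of_norm_le (integrable_const C)
      (by filter_upwards [hμ.2.1] with u hu; exact key u hu)
    rwa [integral_const, probReal_univ, one_smul] at this
  have hpow : (d : ℝ) ^ ((3 : ℝ) / 2) = d * Real.sqrt d := by
    rw [Real.sqrt_eq_rpow, show (3:ℝ)/2 = 1 + 1/2 by norm_num, Real.rpow_add hd0,
      Real.rpow_one]
  calc ‖(∫ u, c u • u ∂μ) - g‖ ≤ C := hfinal
    _ = L / 2 * lam * (d : ℝ) ^ ((3 : ℝ) / 2) := by rw [hC, hpow]; ring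
end
end

section
/- Let f : ℝ^d → ℝ be L-smooth, λ > 0, and u uniform on √d · S^{d-1}. Then E_u[‖g_λ(x)‖²] ≤ 2d · ‖∇f(x)‖² + (L²/2) λ² d³, where g_λ(x) = ((f(x+λu) − f(x−λu))/(2λ)) u. -/
open MeasureTheory
open scoped RealInnerProductSpace

noncomputable section

section Aux

variable {E : Type*} [NormedAddCommGroup E] [InnerProductSpace ℝ E] [CompleteSpace E]

lemma gradient_inner_eq (f : E → ℝ) (y v : E) : ⟪gradient f y, v⟫ = fderiv ℝ f y v := by
  simp [gradient, InnerProductSpace.toDual_symm_apply]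

lemma taylor_bound (f : E → ℝ) (hf : Differentiable ℝ f) (L : ℝ)
    (hL : ∀ x y, ‖gradient f x - gradient f y‖ ≤ L * ‖x - y‖) (x v : E) :
    |f (x + v) - f x - ⟪gradient f x, v⟫| ≤ L / 2 * ‖v‖ ^ 2 := by
  have hLip : LipschitzWith L.toNNReal (gradient f) := by
    refine LipschitzWith.of_dist_le_mul fun a b => ?_
    rw [dist_eq_norm, dist_eq_norm]
    exact (hL a b).trans (mul_le_mul_of_nonneg_right (Real.le_coe_toNNReal L) (norm_nonneg _))
  set φ' : ℝ → ℝ := fun t => ⟪gradient f (x + t • v), v⟫ with hφ'def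
  have hφ : ∀ t : ℝ, HasDerivAt (fun s : ℝ => f (x + s • v)) (φ' t) t := by
    intro t
    have h1 : HasDerivAt (fun s : ℝ => x + s • v) v t := by
      simpa using ((hasDerivAt_id t).smul_const v).const_add x
    have h2 := (hf (x + t • v)).hasFDerivAt.comp_hasDerivAt t h1
    rw [show φ' t = fderiv ℝ f (x + t • v) v from gradient_inner_eq f _ v]
    exact h2
  have hφ'c : Continuous φ' :=
    (hLip.continuous.comp (continuous_const.add (continuous_id.smul continuous_const))).inner continuous_const
  have hftc : ∫ t in (0:ℝ)..1, φ' t = f (x + v) - f x := by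
    have := intervalIntegral.integral_eq_sub_of_hasDerivAt (f := fun s : ℝ => f (x + s • v))
      (fun t _ => hφ t) (hφ'c.intervalIntegrable 0 1)
    simpa using this
  have hsub : f (x + v) - f x - ⟪gradient f x, v⟫ = ∫ t in (0:ℝ)..1, (φ' t - φ' 0) := by
    rw [intervalIntegral.integral_sub (hφ'c.intervalIntegrable 0 1) intervalIntegrable_const,
      hftc]
    simp [hφ'def]
  have hbound : ∀ t ∈ Set.uIoc (0:ℝ) 1, ‖φ' t - φ' 0‖ ≤ L * ‖v‖ ^ 2 * t := by
    intro t ht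
    rw [Set.uIoc_of_le (by norm_num : (0:ℝ) ≤ 1)] at ht
    have ht0 : 0 ≤ t := le_of_lt ht.1
    have h1 : φ' t - φ' 0 = ⟪gradient f (x + t • v) - gradient f x, v⟫ := by
      simp [hφ'def, inner_sub_left]
    rw [h1, Real.norm_eq_abs]
    calc |⟪gradient f (x + t • v) - gradient f x, v⟫|
        ≤ ‖gradient f (x + t • v) - gradient f x‖ * ‖v‖ := abs_real_inner_le_norm _ _
      _ ≤ (L * ‖(x + t • v) - x‖) * ‖v‖ :=
          mul_le_mul_of_nonneg_right (hL _ _) (norm_nonneg _)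
      _ = L * ‖v‖ ^ 2 * t := by
          rw [show x + t • v - x = t • v from by abel, norm_smul, Real.norm_eq_abs,
            abs_of_nonneg ht0]
          ring
  have hInt : IntervalIntegrable (fun t => L * ‖v‖ ^ 2 * t) MeasureTheory.volume 0 1 :=
    (continuous_const.mul continuous_id).intervalIntegrable 0 1
  have hle := intervalIntegral.norm_integral_le_abs_of_norm_le
    ((ae_restrict_mem measurableSet_uIoc).mono hbound) hInt
  have hval : ∫ t in (0:ℝ)..1, L * ‖v‖ ^ 2 * t = L * ‖v‖ ^ 2 * (1 / 2) := by
    rw [intervalIntegral.integral_const_mul, integral_id]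
    norm_num
  have hLnn : 0 ≤ L * ‖v‖ ^ 2 := by
    have h0 : 0 ≤ L * ‖x - (x + v)‖ := le_trans (norm_nonneg _) (hL x (x + v))
    have h1 : ‖x - (x + v)‖ = ‖v‖ := by simp
    rw [h1] at h0
    nlinarith [norm_nonneg v]
  rw [hsub]
  rw [Real.norm_eq_abs] at hle
  refine hle.trans ?_
  rw [hval, abs_of_nonneg (by linarith)]
  ring_nf
  linarith

end Aux

section Moment

variable {d : ℕ}

lemma inner_sq_integrable (μ : Measure (EuclideanSpace ℝ (Fin d)))
    [IsProbabilityMeasure μ] (hnorm : ∀ᵐ u ∂μ, ‖u‖ = Real.sqrt d)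
    (v : EuclideanSpace ℝ (Fin d)) :
    Integrable (fun u => ⟪v, u⟫ ^ 2) μ := by
  refine Integrable.mono' (integrable_const (‖v‖ ^ 2 * d))
    ((continuous_const.inner continuous_id).pow 2).aestronglyMeasurable ?_
  filter_upwards [hnorm] with u hu
  rw [Real.norm_eq_abs, abs_of_nonneg (sq_nonneg _)]
  have h1 : |⟪v, u⟫| ≤ ‖v‖ * ‖u‖ := abs_real_inner_le_norm _ _
  have h2 : ⟪v, u⟫ ^ 2 ≤ (‖v‖ * ‖u‖) ^ 2 := by
    rw [← sq_abs]
    exact pow_le_pow_left₀ (abs_nonneg _) h1 2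
  have h3 : ‖u‖ ^ 2 = (d : ℝ) := by
    rw [hu, Real.sq_sqrt (Nat.cast_nonneg d)]
  nlinarith
end Moment

section Moment2

lemma sphere_inner_sq_integral {d : ℕ} (hd : 1 ≤ d) (μ : Measure (EuclideanSpace ℝ (Fin d)))
    (hμ : IsUniformSphere μ (Real.sqrt d)) (v : EuclideanSpace ℝ (Fin d)) :
    ∫ u, ⟪v, u⟫ ^ 2 ∂μ = ‖v‖ ^ 2 := by
  obtain ⟨hprob, hnorm, hinv⟩ := hμ
  haveI := hprob
  -- invariance of integrals under isometries
  have key : ∀ (O : EuclideanSpace ℝ (Fin d) ≃ₗᵢ[ℝ] EuclideanSpace ℝ (Fin d))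
      (w : EuclideanSpace ℝ (Fin d)),
      ∫ u, ⟪w, u⟫ ^ 2 ∂μ = ∫ u, ⟪w, O u⟫ ^ 2 ∂μ := by
    intro O w
    conv_lhs => rw [← hinv O]
    exact integral_map O.continuous.measurable.aemeasurable
      ((continuous_const.inner continuous_id).pow 2).aestronglyMeasurable
  -- all unit vectors give the same integral
  have hunit : ∀ v w : EuclideanSpace ℝ (Fin d), ‖v‖ = 1 → ‖w‖ = 1 →
      ∫ u, ⟪v, u⟫ ^ 2 ∂μ = ∫ u, ⟪w, u⟫ ^ 2 ∂μ := by
    intro v w hv hw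
    set O := Submodule.reflection (ℝ ∙ (w - v))ᗮ with hO
    have hOw : O w = v := Submodule.reflection_sub (by rw [hv, hw])
    calc ∫ u, ⟪v, u⟫ ^ 2 ∂μ = ∫ u, ⟪O w, u⟫ ^ 2 ∂μ := by rw [hOw]
      _ = ∫ u, ⟪O w, O u⟫ ^ 2 ∂μ := key O (O w)
      _ = ∫ u, ⟪w, u⟫ ^ 2 ∂μ := by
          congr 1
          funext u
          rw [LinearIsometryEquiv.inner_map_map]
  set e : Fin d → EuclideanSpace ℝ (Fin d) := fun i => EuclideanSpace.single i (1 : ℝ) with he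
  have hue : ∀ i, ‖e i‖ = 1 := by
    intro i
    simp [he, EuclideanSpace.norm_single]
  set i0 : Fin d := ⟨0, hd⟩ with hi0
  have hsum : ∑ i, ∫ u, ⟪e i, u⟫ ^ 2 ∂μ = (d : ℝ) := by
    rw [← integral_finset_sum _ (fun i _ => inner_sq_integrable μ hnorm (e i))]
    have hae : ∀ᵐ u ∂μ, ∑ i, ⟪e i, u⟫ ^ 2 = (d : ℝ) := by
      filter_upwards [hnorm] with u hu
      have h1 : ∀ i, ⟪e i, u⟫ = u i := by
        intro i
        simp [he, EuclideanSpace.inner_single_left]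
      simp_rw [h1]
      have h2 : ∑ i, u i ^ 2 = ‖u‖ ^ 2 := by
        rw [← real_inner_self_eq_norm_sq]
        rw [PiLp.inner_apply]
        simp [sq]
      rw [h2, hu, Real.sq_sqrt (Nat.cast_nonneg d)]
    rw [integral_congr_ae hae]
    simp
  have heach : ∀ i, ∫ u, ⟪e i, u⟫ ^ 2 ∂μ = ∫ u, ⟪e i0, u⟫ ^ 2 ∂μ := fun i =>
    hunit _ _ (hue i) (hue i0)
  have hone : ∫ u, ⟪e i0, u⟫ ^ 2 ∂μ = 1 := by
    have : (d : ℝ) * ∫ u, ⟪e i0, u⟫ ^ 2 ∂μ = (d : ℝ) := by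
      conv_rhs => rw [← hsum]
      rw [Finset.sum_congr rfl (fun i _ => heach i), Finset.sum_const,
        Finset.card_univ, Fintype.card_fin, nsmul_eq_mul]
    have hd0 : (d : ℝ) ≠ 0 := Nat.cast_ne_zero.mpr (by omega)
    have h2 : (d : ℝ) * ∫ u, ⟪e i0, u⟫ ^ 2 ∂μ = (d : ℝ) * 1 := by rw [this, mul_one]
    exact mul_left_cancel₀ hd0 h2
  rcases eq_or_ne v 0 with rfl | hv
  · simp
  · have hnv : ‖v‖ ≠ 0 := norm_ne_zero_iff.mpr hv
    set w : EuclideanSpace ℝ (Fin d) := ‖v‖⁻¹ • v with hw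
    have hwu : ‖w‖ = 1 := by
      rw [hw, norm_smul, norm_inv, norm_norm, inv_mul_cancel₀ hnv]
    have hvw : ∀ u, ⟪v, u⟫ = ‖v‖ * ⟪w, u⟫ := by
      intro u
      rw [hw, real_inner_smul_left]
      field_simp
    calc ∫ u, ⟪v, u⟫ ^ 2 ∂μ = ∫ u, ‖v‖ ^ 2 * ⟪w, u⟫ ^ 2 ∂μ := by
          congr 1; funext u; rw [hvw u]; ring
      _ = ‖v‖ ^ 2 * ∫ u, ⟪w, u⟫ ^ 2 ∂μ := integral_const_mul _ _
      _ = ‖v‖ ^ 2 := by rw [hunit w (e i0) hwu (hue i0), hone, mul_one]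

end Moment2

/-- For an `L`-smooth `f` and `u` uniform on the sphere of radius `√d`, the
second moment of the two-point estimator satisfies
`E[‖g_λ(x)‖²] ≤ 2d‖∇f(x)‖² + (L²/2)λ²d³`. -/
theorem two_point_estimator_second_moment (d : ℕ) (hd : 1 ≤ d) (L lam : ℝ) (hlam : 0 < lam)
    (f : EuclideanSpace ℝ (Fin d) → ℝ) (hf : Differentiable ℝ f)
    (hL : ∀ x y, ‖gradient f x - gradient f y‖ ≤ L * ‖x - y‖)
    (μ : Measure (EuclideanSpace ℝ (Fin d)))
    (hμ : IsUniformSphere μ (Real.sqrt d))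
    (x : EuclideanSpace ℝ (Fin d)) :
    (∫ u, ‖((f (x + lam • u) - f (x - lam • u)) / (2 * lam)) • u‖ ^ 2 ∂μ)
      ≤ 2 * d * ‖gradient f x‖ ^ 2 + L ^ 2 / 2 * lam ^ 2 * (d : ℝ) ^ 3 := by
  obtain ⟨hprob, hnorm, hinv⟩ := id hμ
  haveI := hprob
  set g := gradient f x with hg
  -- the bounding function
  set B : EuclideanSpace ℝ (Fin d) → ℝ :=
    fun u => 2 * d * ⟪g, u⟫ ^ 2 + L ^ 2 / 2 * lam ^ 2 * (d : ℝ) ^ 3 with hB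
  have hBint : Integrable B μ :=
    ((inner_sq_integrable μ hnorm g).const_mul _).add (integrable_const _)
  have hae : ∀ᵐ u ∂μ, ‖((f (x + lam • u) - f (x - lam • u)) / (2 * lam)) • u‖ ^ 2 ≤ B u := by
    filter_upwards [hnorm] with u hu
    have hu2 : ‖u‖ ^ 2 = (d : ℝ) := by rw [hu, Real.sq_sqrt (Nat.cast_nonneg d)]
    have hlu : ‖lam • u‖ ^ 2 = lam ^ 2 * d := by
      rw [norm_smul, mul_pow, Real.norm_eq_abs, sq_abs, hu2]
    set ip := ⟪g, u⟫ with hip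
    have h1 : |f (x + lam • u) - f x - lam * ip| ≤ L / 2 * (lam ^ 2 * d) := by
      have := taylor_bound f hf L hL x (lam • u)
      rw [hlu] at this
      rwa [real_inner_smul_right] at this
    have h2 : |f (x - lam • u) - f x + lam * ip| ≤ L / 2 * (lam ^ 2 * d) := by
      have := taylor_bound f hf L hL x (-(lam • u))
      rw [norm_neg, hlu] at this
      rw [← sub_eq_add_neg] at this
      rwa [inner_neg_right, real_inner_smul_right, sub_neg_eq_add] at this
    set Δ := f (x + lam • u) - f (x - lam • u) with hΔ
    have h3 : |Δ - 2 * lam * ip| ≤ L * (lam ^ 2 * d) := by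
      have : Δ - 2 * lam * ip =
          (f (x + lam • u) - f x - lam * ip) - (f (x - lam • u) - f x + lam * ip) := by
        rw [hΔ]; ring
      rw [this]
      calc |_ - _| ≤ |f (x + lam • u) - f x - lam * ip| + |f (x - lam • u) - f x + lam * ip| :=
            abs_sub _ _
        _ ≤ L / 2 * (lam ^ 2 * d) + L / 2 * (lam ^ 2 * d) := add_le_add h1 h2
        _ = L * (lam ^ 2 * d) := by ring
    have hnormsq : ‖(Δ / (2 * lam)) • u‖ ^ 2 = (Δ / (2 * lam)) ^ 2 * d := by
      rw [norm_smul, mul_pow, Real.norm_eq_abs, sq_abs, hu2]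
    rw [hnormsq, hB]
    have hc : (Δ / (2 * lam)) ^ 2 ≤ 2 * ip ^ 2 + L ^ 2 * lam ^ 2 * d ^ 2 / 2 := by
      have hdiff : |Δ / (2 * lam) - ip| ≤ L * lam * d / 2 := by
        have h2l : (0:ℝ) < 2 * lam := by linarith
        rw [show Δ / (2 * lam) - ip = (Δ - 2 * lam * ip) / (2 * lam) from by field_simp,
          abs_div, abs_of_pos h2l, div_le_iff₀ h2l]
        calc |Δ - 2 * lam * ip| ≤ L * (lam ^ 2 * d) := h3
          _ = L * lam * d / 2 * (2 * lam) := by ring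
      have hsq : (Δ / (2 * lam) - ip) ^ 2 ≤ (L * lam * d / 2) ^ 2 := by
        rw [← sq_abs]
        exact pow_le_pow_left₀ (abs_nonneg _) hdiff 2
      nlinarith [sq_nonneg (Δ / (2 * lam) - 2 * ip)]
    have hd0 : (0:ℝ) ≤ d := Nat.cast_nonneg d
    nlinarith [sq_nonneg ip]
  calc (∫ u, ‖((f (x + lam • u) - f (x - lam • u)) / (2 * lam)) • u‖ ^ 2 ∂μ)
      ≤ ∫ u, B u ∂μ :=
        integral_mono_of_nonneg (Filter.Eventually.of_forall fun u => sq_nonneg _) hBint hae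
    _ = 2 * d * ∫ u, ⟪g, u⟫ ^ 2 ∂μ + L ^ 2 / 2 * lam ^ 2 * (d : ℝ) ^ 3 := by
        rw [hB, integral_add ((inner_sq_integrable μ hnorm g).const_mul _) (integrable_const _),
          integral_const_mul, integral_const]
        simp
    _ = 2 * d * ‖g‖ ^ 2 + L ^ 2 / 2 * lam ^ 2 * (d : ℝ) ^ 3 := by
        rw [sphere_inner_sq_integral hd μ hμ g]
end
end

section
/- Let f : ℝ^d → ℝ be L-smooth and G ∈ ℝ^{d×k} with orthonormal columns. For u uniform on √k · S^{k-1}, define Δ = (f(x+λGu) − f(x−λGu))/(2λ). Then E_u[Δ²] ≤ (L²λ²k²)/2 + 2‖Gᵀ∇f(x)‖² ≤ (L²λ²k²)/2 + 2‖∇f(x)‖². -/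
open MeasureTheory

noncomputable section

/-- Descent lemma: quadratic upper bound for functions with Lipschitz gradient. -/
theorem descent_lemma {d : ℕ} {L : ℝ} {f : EuclideanSpace ℝ (Fin d) → ℝ}
    (hf : Differentiable ℝ f)
    (hL : ∀ x y, ‖gradient f x - gradient f y‖ ≤ L * ‖x - y‖)
    (x h : EuclideanSpace ℝ (Fin d)) :
    |f (x + h) - f x - inner ℝ (gradient f x) h| ≤ L / 2 * ‖h‖ ^ 2 := by
  rcases eq_or_ne h 0 with rfl | hh
  · simp
  have hL0 : 0 ≤ L := by
    have h1 := hL x (x + h)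
    have h2 : ‖x - (x + h)‖ = ‖h‖ := by
      rw [show x - (x + h) = -h by abel, norm_neg]
    rw [h2] at h1
    nlinarith [norm_nonneg (gradient f x - gradient f (x + h)), norm_pos_iff.2 hh]
  have hgc : Continuous (gradient f) := by
    refine LipschitzWith.continuous (K := L.toNNReal) ?_
    refine LipschitzWith.of_dist_le_mul fun a b => ?_
    rw [dist_eq_norm, dist_eq_norm]
    calc ‖gradient f a - gradient f b‖ ≤ L * ‖a - b‖ := hL a b
    _ = L.toNNReal * ‖a - b‖ := by rw [Real.coe_toNNReal L hL0]
  set g := gradient f x with hg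
  have hder : ∀ t : ℝ, HasDerivAt (fun t : ℝ => f (x + t • h) - t * inner ℝ g h)
      ((inner ℝ (gradient f (x + t • h)) h : ℝ) - inner ℝ g h) t := by
    intro t
    have hc : HasDerivAt (fun t : ℝ => x + t • h) h t := by
      simpa using ((hasDerivAt_id t).smul_const h).const_add x
    have h1 : HasDerivAt (fun t : ℝ => f (x + t • h))
        (inner ℝ (gradient f (x + t • h)) h : ℝ) t := by
      have := (hf (x + t • h)).hasGradientAt.hasFDerivAt.comp_hasDerivAt t hc
      simpa [Function.comp_def] using this
    exact (h1.sub ((hasDerivAt_id t).mul_const (inner ℝ g h : ℝ))).congr_deriv (by ring)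
  have hderc : Continuous fun t : ℝ => (inner ℝ (gradient f (x + t • h)) h : ℝ) - inner ℝ g h := by
    have : Continuous fun t : ℝ => x + t • h := by continuity
    exact ((continuous_inner.comp ((hgc.comp this).prodMk continuous_const)).sub
      continuous_const)
  have hftc : f (x + h) - f x - inner ℝ g h
      = ∫ t in (0:ℝ)..1, ((inner ℝ (gradient f (x + t • h)) h : ℝ) - inner ℝ g h) := by
    rw [intervalIntegral.integral_eq_sub_of_hasDerivAt (fun t _ => hder t)
      (hderc.intervalIntegrable 0 1)]
    simp
    ring
  rw [hftc]
  have hbound : ∀ t ∈ Set.Ioc (0:ℝ) 1,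
      ‖(inner ℝ (gradient f (x + t • h)) h : ℝ) - inner ℝ g h‖ ≤ (L * ‖h‖ ^ 2) * t := by
    intro t ht
    calc ‖(inner ℝ (gradient f (x + t • h)) h : ℝ) - inner ℝ g h‖
        = ‖(inner ℝ (gradient f (x + t • h) - g) h : ℝ)‖ := by rw [← inner_sub_left]
      _ ≤ ‖gradient f (x + t • h) - g‖ * ‖h‖ := norm_inner_le_norm _ _
      _ ≤ (L * ‖x + t • h - x‖) * ‖h‖ := by
          have := hL (x + t • h) x
          exact mul_le_mul_of_nonneg_right this (norm_nonneg h)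
      _ = (L * ‖h‖ ^ 2) * t := by
          rw [show x + t • h - x = t • h by abel, norm_smul]
          simp [abs_of_pos ht.1]
          ring
  have := intervalIntegral.norm_integral_le_of_norm_le (μ := volume) (a := (0:ℝ)) (b := 1)
    (f := fun t => (inner ℝ (gradient f (x + t • h)) h : ℝ) - inner ℝ g h)
    (g := fun t => (L * ‖h‖ ^ 2) * t) (by norm_num) ?_ ?_
  · rw [← Real.norm_eq_abs]
    refine le_trans this ?_
    rw [intervalIntegral.integral_const_mul, integral_id]
    apply le_of_eq
    ring
  · exact ae_of_all _ fun t ht => hbound t ht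
  · exact (continuous_const.mul continuous_id).intervalIntegrable 0 1

/-- Change of variables along a linear isometry, for a rotation-invariant measure. -/
lemma integral_comp_isometry {n : ℕ} {μ : Measure (EuclideanSpace ℝ (Fin n))}
    (hrot : ∀ O : EuclideanSpace ℝ (Fin n) ≃ₗᵢ[ℝ] EuclideanSpace ℝ (Fin n), μ.map O = μ)
    (O : EuclideanSpace ℝ (Fin n) ≃ₗᵢ[ℝ] EuclideanSpace ℝ (Fin n))
    {F : EuclideanSpace ℝ (Fin n) → ℝ} (hF : Continuous F) :
    ∫ u, F u ∂μ = ∫ u, F (O u) ∂μ := by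
  conv_lhs => rw [← hrot O]
  rw [integral_map (O.continuous.aemeasurable) (hF.aestronglyMeasurable)]

lemma unit_vec_moment {n : ℕ} {μ : Measure (EuclideanSpace ℝ (Fin n))} {r : ℝ}
    (hμ : IsUniformSphere μ r) (hn : 0 < n) (v : EuclideanSpace ℝ (Fin n)) (hv : ‖v‖ = 1) :
    ∫ u, (inner ℝ v u : ℝ) ^ 2 ∂μ = ∫ u, (u ⟨0, hn⟩) ^ 2 ∂μ := by
  obtain ⟨hprob, hsph, hrot⟩ := hμ
  set i₀ : Fin n := ⟨0, hn⟩
  have hcard : Module.finrank ℝ (EuclideanSpace ℝ (Fin n)) = Fintype.card (Fin n) := by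
    simp
  have hon : Orthonormal ℝ (Set.restrict {i₀} (fun _ : Fin n => v)) := by
    constructor
    · intro i; exact hv
    · intro i j hij
      exact absurd (Subsingleton.elim i j) hij
  obtain ⟨B, hB⟩ := hon.exists_orthonormalBasis_extension_of_card_eq hcard
  have hBv : B i₀ = v := hB i₀ rfl
  have key := integral_comp_isometry hrot B.repr.symm
    (F := fun u => (inner ℝ v u : ℝ) ^ 2)
    (by exact (continuous_inner.comp (Continuous.prodMk continuous_const continuous_id)).pow 2)
  rw [key]
  congr 1
  ext u
  have : (inner ℝ v (B.repr.symm u) : ℝ) = inner ℝ (B.repr v) u := by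
    rw [← B.repr.inner_map_map v (B.repr.symm u)]
    simp
  simp only
  rw [this, ← hBv, B.repr_self, EuclideanSpace.inner_single_left]
  simp

lemma coord_sq_integrable {n : ℕ} {μ : Measure (EuclideanSpace ℝ (Fin n))}
    (hμ : IsUniformSphere μ (Real.sqrt n)) (j : Fin n) :
    Integrable (fun u : EuclideanSpace ℝ (Fin n) => (u j) ^ 2) μ := by
  obtain ⟨hprob, hsph, _⟩ := hμ
  haveI := hprob
  refine Integrable.mono' (integrable_const (n : ℝ)) ?_ ?_
  · exact ((continuous_apply j).comp (PiLp.continuous_ofLp 2 _)).pow 2 |>.aestronglyMeasurable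
  · filter_upwards [hsph] with u hu
    have h1 : (u j) ^ 2 ≤ ‖u‖ ^ 2 := by
      rw [EuclideanSpace.norm_eq, Real.sq_sqrt (by positivity)]
      rw [show (u j)^2 = ‖u j‖^2 by simp [sq_abs]]
      exact Finset.single_le_sum (f := fun i => ‖u i‖ ^ 2)
        (fun i _ => by positivity) (Finset.mem_univ j)
    rw [hu, Real.sq_sqrt (by positivity)] at h1
    simpa [abs_of_nonneg (sq_nonneg (u j))] using h1

lemma coord_moment_one {n : ℕ} {μ : Measure (EuclideanSpace ℝ (Fin n))}
    (hμ : IsUniformSphere μ (Real.sqrt n)) (hn : 0 < n) :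
    ∫ u, (u ⟨0, hn⟩) ^ 2 ∂μ = 1 := by
  obtain ⟨hprob, hsph, hrot⟩ := hμ
  haveI := hprob
  set c := ∫ u, (u ⟨0, hn⟩) ^ 2 ∂μ with hc
  have hcoord : ∀ j : Fin n, ∫ u, (u j) ^ 2 ∂μ = c := by
    intro j
    have hv : ‖(EuclideanSpace.single j (1:ℝ))‖ = 1 := by
      simp [EuclideanSpace.norm_single]
    rw [hc, ← unit_vec_moment ⟨hprob, hsph, hrot⟩ hn _ hv]
    congr 1
    ext u
    rw [EuclideanSpace.inner_single_left]
    simp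
  have hsum : ∑ j : Fin n, ∫ u, (u j) ^ 2 ∂μ = ∫ u, ∑ j : Fin n, (u j) ^ 2 ∂μ := by
    exact (integral_finset_sum Finset.univ fun j _ =>
      coord_sq_integrable ⟨hprob, hsph, hrot⟩ j).symm
  have hnorm : ∫ u, ∑ j : Fin n, (u j) ^ 2 ∂μ = (n : ℝ) := by
    rw [integral_congr_ae (g := fun _ => (n : ℝ)) ?_]
    · simp
    · filter_upwards [hsph] with u hu
      have : ∑ j : Fin n, (u j) ^ 2 = ‖u‖ ^ 2 := by
        rw [EuclideanSpace.norm_eq, Real.sq_sqrt (by positivity)]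
        simp [sq_abs]
      rw [this, hu, Real.sq_sqrt (by positivity)]
  have : (n : ℝ) * c = (n : ℝ) := by
    calc (n:ℝ) * c = ∑ j : Fin n, ∫ u, (u j) ^ 2 ∂μ := by
          simp [hcoord, Finset.sum_const, mul_comm]
      _ = (n : ℝ) := by rw [hsum, hnorm]
  have hn' : (n : ℝ) ≠ 0 := Nat.cast_ne_zero.2 hn.ne'
  field_simp at this
  tauto

lemma vec_moment {n : ℕ} {μ : Measure (EuclideanSpace ℝ (Fin n))}
    (hμ : IsUniformSphere μ (Real.sqrt n)) (a : EuclideanSpace ℝ (Fin n)) :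
    ∫ u, (inner ℝ a u : ℝ) ^ 2 ∂μ = ‖a‖ ^ 2 := by
  obtain ⟨hprob, hsph, hrot⟩ := hμ
  haveI := hprob
  rcases Nat.eq_zero_or_pos n with rfl | hn
  · have : a = 0 := Subsingleton.elim _ _
    simp [this]
  rcases eq_or_ne a 0 with rfl | ha
  · simp
  have hna : ‖a‖ ≠ 0 := norm_ne_zero_iff.2 ha
  set v := ‖a‖⁻¹ • a with hv
  have hv1 : ‖v‖ = 1 := by
    rw [hv, norm_smul]
    simp [abs_of_nonneg (norm_nonneg a), hna]
  have hav : ∀ u, (inner ℝ a u : ℝ) = ‖a‖ * inner ℝ v u := by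
    intro u
    rw [hv, real_inner_smul_left]
    field_simp
  calc ∫ u, (inner ℝ a u : ℝ) ^ 2 ∂μ = ∫ u, ‖a‖ ^ 2 * (inner ℝ v u : ℝ) ^ 2 ∂μ := by
        congr 1; ext u; rw [hav u]; ring
    _ = ‖a‖ ^ 2 * ∫ u, (inner ℝ v u : ℝ) ^ 2 ∂μ := integral_const_mul _ _
    _ = ‖a‖ ^ 2 := by
        rw [unit_vec_moment ⟨hprob, hsph, hrot⟩ hn v hv1,
          coord_moment_one ⟨hprob, hsph, hrot⟩ hn, mul_one]

set_option maxHeartbeats 1600000 in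
/-- For `L`-smooth `f`, orthonormal-column `G`, and `u` uniform on the sphere of
radius `√k`, with `Δ = (f(x+λGu) − f(x−λGu))/(2λ)`:
`E[Δ²] ≤ L²λ²k²/2 + 2‖Gᵀ∇f(x)‖² ≤ L²λ²k²/2 + 2‖∇f(x)‖²`. -/
theorem subspace_estimator_second_moment (d k : ℕ) (L lam : ℝ) (hlam : 0 < lam)
    (f : EuclideanSpace ℝ (Fin d) → ℝ) (hf : Differentiable ℝ f)
    (hL : ∀ x y, ‖gradient f x - gradient f y‖ ≤ L * ‖x - y‖)
    (G : Fin k → EuclideanSpace ℝ (Fin d)) (hG : Orthonormal ℝ G)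
    (μ : Measure (EuclideanSpace ℝ (Fin k)))
    (hμ : IsUniformSphere μ (Real.sqrt k))
    (x : EuclideanSpace ℝ (Fin d)) :
    (∫ u, ((f (x + lam • ∑ i, u i • G i) - f (x - lam • ∑ i, u i • G i))
          / (2 * lam)) ^ 2 ∂μ)
        ≤ L ^ 2 * lam ^ 2 * (k : ℝ) ^ 2 / 2
            + 2 * ∑ i, (inner ℝ (G i) (gradient f x) : ℝ) ^ 2 ∧
    L ^ 2 * lam ^ 2 * (k : ℝ) ^ 2 / 2 + 2 * ∑ i, (inner ℝ (G i) (gradient f x) : ℝ) ^ 2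
        ≤ L ^ 2 * lam ^ 2 * (k : ℝ) ^ 2 / 2 + 2 * ‖gradient f x‖ ^ 2 := by
  obtain ⟨hprob, hsph, hrot⟩ := hμ
  haveI := hprob
  constructor
  · -- first inequality
    rcases Nat.eq_zero_or_pos k with rfl | hk
    · simp
    set g := gradient f x with hgdef
    set a : EuclideanSpace ℝ (Fin k) := WithLp.toLp 2 (fun i => (inner ℝ (G i) g : ℝ)) with ha
    have hainner : ∀ u : EuclideanSpace ℝ (Fin k),
        (inner ℝ g (∑ i, u i • G i) : ℝ) = inner ℝ a u := by
      intro u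
      rw [inner_sum, PiLp.inner_apply]
      refine Finset.sum_congr rfl fun i _ => ?_
      rw [real_inner_smul_right]
      simp [ha, real_inner_comm, mul_comm]
    have hnormy : ∀ u : EuclideanSpace ℝ (Fin k), ‖∑ i, u i • G i‖ ^ 2 = ∑ i, (u i) ^ 2 := by
      intro u
      rw [← real_inner_self_eq_norm_sq, hG.inner_sum u u Finset.univ]
      simp [sq]
    have hptwise : ∀ᵐ u ∂μ,
        ((f (x + lam • ∑ i, u i • G i) - f (x - lam • ∑ i, u i • G i)) / (2 * lam)) ^ 2
          ≤ L ^ 2 * lam ^ 2 * (k : ℝ) ^ 2 / 2 + 2 * (inner ℝ a u : ℝ) ^ 2 := by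
      filter_upwards [hsph] with u hu
      set y := ∑ i, u i • G i with hy
      have hy2 : ‖y‖ ^ 2 = (k : ℝ) := by
        rw [hy, hnormy u]
        have : ∑ i, (u i) ^ 2 = ‖u‖ ^ 2 := by
          rw [EuclideanSpace.norm_eq, Real.sq_sqrt (by positivity)]
          simp [sq_abs]
        rw [this, hu, Real.sq_sqrt (by positivity)]
      have d1 := descent_lemma hf hL x (lam • y)
      have d2 := descent_lemma hf hL x (-(lam • y))
      rw [show x + -(lam • y) = x - lam • y by abel, norm_neg, inner_neg_right] at d2
      have hinner : (inner ℝ g (lam • y) : ℝ) = lam * inner ℝ a u := by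
        rw [real_inner_smul_right, hainner u]
      have hnorm2 : ‖lam • y‖ ^ 2 = lam ^ 2 * (k : ℝ) := by
        rw [norm_smul, mul_pow, hy2]
        simp [abs_of_pos hlam]
      rw [hinner, hnorm2] at d1 d2
      set A := f (x + lam • y) with hA
      set B := f (x - lam • y) with hB
      set s : ℝ := inner ℝ a u with hs
      have hE : |A - B - 2 * lam * s| ≤ L * lam ^ 2 * (k : ℝ) := by
        have := abs_sub (A - f x - lam * s) (B - f x - -(lam * s))
        calc |A - B - 2 * lam * s| = |(A - f x - lam * s) - (B - f x + lam * s)| := by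
              ring_nf
          _ ≤ |A - f x - lam * s| + |B - f x + lam * s| := abs_sub _ _
          _ ≤ L / 2 * (lam ^ 2 * k) + L / 2 * (lam ^ 2 * k) := by
              refine add_le_add d1 ?_
              calc |B - f x + lam * s| = |B - f x - -(lam * s)| := by ring_nf
                _ ≤ L / 2 * (lam ^ 2 * k) := d2
          _ = L * lam ^ 2 * (k : ℝ) := by ring
      have hE2 : (A - B - 2 * lam * s) ^ 2 ≤ (L * lam ^ 2 * (k : ℝ)) ^ 2 := by
        have h1 := abs_le.mp hE
        nlinarith [h1.1, h1.2]
      rw [div_pow, div_le_iff₀ (by positivity)]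
      nlinarith [hE2, sq_nonneg (A - B - 4 * lam * s), sq_nonneg lam, hlam]
    have hint2 : Integrable (fun u : EuclideanSpace ℝ (Fin k) => (inner ℝ a u : ℝ) ^ 2) μ := by
      refine Integrable.mono' (integrable_const (‖a‖ ^ 2 * (k : ℝ))) ?_ ?_
      · have hcont : Continuous fun u : EuclideanSpace ℝ (Fin k) => (inner ℝ a u : ℝ) ^ 2 :=
          (Continuous.inner continuous_const continuous_id).pow 2
        exact hcont.aestronglyMeasurable
      · filter_upwards [hsph] with u hu
        have h1 : |(inner ℝ a u : ℝ)| ≤ ‖a‖ * ‖u‖ := abs_real_inner_le_norm a u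
        have h2 : (inner ℝ a u : ℝ) ^ 2 ≤ (‖a‖ * ‖u‖) ^ 2 := by
          nlinarith [abs_nonneg (inner ℝ a u : ℝ), sq_abs (inner ℝ a u : ℝ)]
        rw [hu] at h2
        rw [Real.norm_eq_abs, abs_of_nonneg (sq_nonneg _)]
        calc (inner ℝ a u : ℝ) ^ 2 ≤ (‖a‖ * Real.sqrt k) ^ 2 := h2
          _ = ‖a‖ ^ 2 * (k : ℝ) := by
              rw [mul_pow, Real.sq_sqrt (by positivity)]
    have hbdd : Integrable (fun u : EuclideanSpace ℝ (Fin k) =>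
        L ^ 2 * lam ^ 2 * (k : ℝ) ^ 2 / 2 + 2 * (inner ℝ a u : ℝ) ^ 2) μ :=
      (integrable_const _).add (hint2.const_mul 2)
    have hle := integral_mono_of_nonneg (ae_of_all μ fun u => sq_nonneg _) hbdd hptwise
    refine le_trans hle ?_
    rw [integral_add (integrable_const _) (hint2.const_mul 2)]
    rw [integral_const, integral_const_mul, vec_moment ⟨hprob, hsph, hrot⟩ a]
    simp only [measure_univ, probReal_univ, ENNReal.toReal_one, smul_eq_mul, one_mul]
    have hna : ‖a‖ ^ 2 = ∑ i, (inner ℝ (G i) g : ℝ) ^ 2 := by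
      rw [EuclideanSpace.norm_eq, Real.sq_sqrt (by positivity)]
      refine Finset.sum_congr rfl fun i _ => ?_
      simp [ha, sq_abs]
    rw [hna]
  · -- second inequality: Bessel
    have hbessel : ∑ i, (inner ℝ (G i) (gradient f x) : ℝ) ^ 2 ≤ ‖gradient f x‖ ^ 2 := by
      have := hG.sum_inner_products_le (gradient f x) (s := Finset.univ)
      simpa [Real.norm_eq_abs, sq_abs] using this
    linarith
end
end
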